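/- Let n ≥ 1 and λ a partition of length at most 2n. Then the successor map suc is injective on SST_{2n}(λ). -/

import Mathlib

/-- `part lam i` : the `i`-th part (1-indexed) of the partition `lam`,
with `lam_i = 0` for `i > ℓ(lam)`. -/
def part (lam : List ℕ) (i : ℕ) : ℕ := lam.getD (i - 1) 0

/-- A partition: a weakly decreasing finite sequence of positive integers. -/
def IsPartition (lam : List ℕ) : Prop :=
  lam.Pairwise (· ≥ ·) ∧ ∀ x ∈ lam, 0 < x

/-- `remAux` computes the set of removable entries of a strictly increasing
sequence, given as a list in *reversed* order (so the head is the last entry). -/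
def remAux : List ℕ → Finset ℕ
  | [] => ∅
  | [_] => ∅
  | b :: a :: rest =>
    if Even b ∧ a + 1 = b ∧ b + (remAux rest).card + 1 < 2 * (rest.length + 2) then
      insert a (insert b (remAux rest))
    else remAux (a :: rest)

/-- `remSet 𝐚` : the set `Rem(𝐚)` of removable entries of the strictly
increasing sequence `𝐚 = (a_1, …, a_l)` (given in its natural order). -/
def remSet (l : List ℕ) : Finset ℕ := remAux l.reverse

/-- `redSeq 𝐚` : the reduction `red(𝐚)`, i.e. `𝐚` with the removable entries
removed. -/
def redSeq (l : List ℕ) : List ℕ := l.filter (fun x => decide (x ∉ remSet l))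

/-!  We represent a semistandard tableau by its list of columns (left to
right), each column being the list of its entries read from top to bottom. -/

/-- Column insertion `w → T` of `w` into the tableau `T` (given as a list of
columns): `w` is inserted into the first column, bumping the smallest entry
`≥ w` into the next column, and so on; the last bumped entry is placed at the
bottom of the first column that accommodates it. -/
def colInsert (w : ℕ) : List (List ℕ) → List (List ℕ)
  | [] => [[w]]
  | c :: rest =>
    match c.dropWhile (fun y => decide (y < w)) with
    | [] => (c ++ [w]) :: rest
    | x :: c₂ => (c.takeWhile (fun y => decide (y < w)) ++ w :: c₂) :: colInsert x rest

/-- Insert the entries of the column `b = (b_1, …, b_k)` (top to bottom)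
successively into `T`; this is the plactic product `b * T`. -/
def insertCol (b : List ℕ) (T : List (List ℕ)) : List (List ℕ) :=
  b.foldl (fun t w => colInsert w t) T

/-- The successor map: `suc T = red(𝐚) * T'`, where `𝐚` is the first column
of `T` and `T'` consists of the remaining columns. -/
def suc : List (List ℕ) → List (List ℕ)
  | [] => []
  | c :: rest => insertCol (redSeq c) rest

/-- `rowLen T i` : the length `λ_i` of the `i`-th row of the tableau `T`,
i.e. the number of columns of length `≥ i`. -/
def rowLen (T : List (List ℕ)) (i : ℕ) : ℕ :=
  T.countP (fun c => decide (i ≤ c.length))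

/-- Validity of the column representation of a semistandard tableau with
entries in `[1, m]`: columns are nonempty and strictly increasing (top to
bottom) with entries in `[1, m]`, column lengths weakly decrease from left to
right, and rows weakly increase from left to right. -/
def IsTableau (m : ℕ) (T : List (List ℕ)) : Prop :=
  (∀ c ∈ T, c ≠ []) ∧
  (∀ c ∈ T, c.Chain' (· < ·)) ∧
  (∀ c ∈ T, ∀ x ∈ c, 1 ≤ x ∧ x ≤ m) ∧
  T.Chain' (fun c c' => c'.length ≤ c.length ∧
    ∀ r < c'.length, c.getD r 0 ≤ c'.getD r 0)

/-- `T` has shape `lam`. -/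
def hasShape (T : List (List ℕ)) (lam : List ℕ) : Prop :=
  ∀ i, 1 ≤ i → rowLen T i = part lam i

/-- `T` is symplectic: the entry in the `k`-th row of the first column is
at least `2k - 1`. -/
def IsSymplectic (T : List (List ℕ)) : Prop :=
  ∀ k, 1 ≤ k → k ≤ (T.headD []).length → 2 * k - 1 ≤ (T.headD []).getD (k - 1) 0

section RedTheory

/-- membership in remAux implies membership in the list -/
lemma mem_of_mem_remAux : ∀ {u : List ℕ} {x : ℕ}, x ∈ remAux u → x ∈ u := by
  intro u
  induction u using remAux.induct with
  | case1 => intro x hx; simp [remAux] at hx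
  | case2 y => intro x hx; simp [remAux] at hx
  | case3 b a rest h ih =>
      intro x hx
      rw [remAux, if_pos h] at hx
      simp only [Finset.mem_insert] at hx
      rcases hx with rfl | rfl | hx
      · simp
      · simp
      · simp [ih hx]
  | case4 b a rest h ih ih2 =>
      intro x hx
      rw [remAux, if_neg h] at hx
      have := ih2 hx
      simp at this ⊢
      tauto

lemma mem_lt_head {y : ℕ} {l : List ℕ} (h : List.IsChain (· > ·) (y :: l)) {x : ℕ}
    (hx : x ∈ l) : x < y := by
  have hp : List.Pairwise (· > ·) (y :: l) := List.isChain_iff_pairwise.mp h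
  exact (List.pairwise_cons.mp hp).1 x hx

lemma remAux_cc_pos {b a : ℕ} {rest : List ℕ}
    (hC : Even b ∧ a + 1 = b ∧ b + (remAux rest).card + 1 < 2 * (rest.length + 2)) :
    remAux (b::a::rest) = insert a (insert b (remAux rest)) := by
  rw [remAux, if_pos hC]

lemma remAux_cc_neg {b a : ℕ} {rest : List ℕ}
    (hC : ¬ (Even b ∧ a + 1 = b ∧ b + (remAux rest).card + 1 < 2 * (rest.length + 2))) :
    remAux (b::a::rest) = remAux (a::rest) := by
  rw [remAux, if_neg hC]

/-- `redR u` : filtered list (decreasing order) -/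
def redR (u : List ℕ) : List ℕ := u.filter (fun x => decide (x ∉ remAux u))

lemma redR_nil : redR [] = [] := rfl
lemma redR_single (x : ℕ) : redR [x] = [x] := by simp [redR, remAux]

lemma redR_removal {b a : ℕ} {rest : List ℕ} (hd : List.IsChain (· > ·) (b::a::rest))
    (hC : Even b ∧ a + 1 = b ∧ b + (remAux rest).card + 1 < 2 * (rest.length + 2)) :
    redR (b::a::rest) = redR rest := by
  have hba : a < b := (List.isChain_cons_cons.mp hd).1
  have hd2 : List.IsChain (· > ·) (a::rest) := (List.isChain_cons_cons.mp hd).2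
  have hb_not : b ∉ remAux rest := fun h => by
    have := mem_lt_head hd2 (mem_of_mem_remAux h); omega
  have ha_not : a ∉ remAux rest := fun h => by
    have := mem_lt_head hd2 (mem_of_mem_remAux h); omega
  unfold redR
  rw [remAux_cc_pos hC]
  rw [List.filter_cons_of_neg (by simp), List.filter_cons_of_neg (by simp)]
  apply List.filter_congr
  intro x hx
  have hxa : x < a := mem_lt_head hd2 hx
  simp only [decide_eq_decide, Finset.mem_insert]
  constructor
  · intro h hmem; exact h (Or.inr (Or.inr hmem))
  · intro h hmem
    rcases hmem with rfl | rfl | hmem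
    · omega
    · omega
    · exact h hmem

lemma redR_keep {b a : ℕ} {rest : List ℕ} (hd : List.IsChain (· > ·) (b::a::rest))
    (hC : ¬ (Even b ∧ a + 1 = b ∧ b + (remAux rest).card + 1 < 2 * (rest.length + 2))) :
    redR (b::a::rest) = b :: redR (a::rest) := by
  have hd2 : List.IsChain (· > ·) (a::rest) := (List.isChain_cons_cons.mp hd).2
  have hb_not : b ∉ remAux (a::rest) := fun h => by
    have h1 := mem_of_mem_remAux h
    have hba : a < b := (List.isChain_cons_cons.mp hd).1
    simp only [List.mem_cons] at h1
    rcases h1 with rfl | h1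
    · omega
    · have := mem_lt_head hd2 h1; omega
  unfold redR
  rw [remAux_cc_neg hC]
  exact List.filter_cons_of_pos (by simpa using hb_not)

lemma card_remAux_add : ∀ {u : List ℕ}, List.IsChain (· > ·) u →
    (redR u).length + (remAux u).card = u.length := by
  intro u
  induction u using remAux.induct with
  | case1 => intro _; simp [redR, remAux]
  | case2 x => intro _; simp [redR_single, remAux]
  | case3 b a rest hC ih =>
      intro hd
      have hba : a < b := (List.isChain_cons_cons.mp hd).1
      have hd2 : List.IsChain (· > ·) (a::rest) := (List.isChain_cons_cons.mp hd).2
      have hd3 : List.IsChain (· > ·) rest := hd2.tail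
      have hb_not : b ∉ remAux rest := fun h => by
        have := mem_lt_head hd2 (mem_of_mem_remAux h); omega
      have ha_not : a ∉ insert b (remAux rest) := by
        simp only [Finset.mem_insert]
        rintro (rfl | h)
        · omega
        · have := mem_lt_head hd2 (mem_of_mem_remAux h); omega
      rw [redR_removal hd hC, remAux_cc_pos hC, Finset.card_insert_of_notMem ha_not,
        Finset.card_insert_of_notMem hb_not]
      have := ih hd3
      simp only [List.length_cons]
      omega
  | case4 b a rest hC ih ih2 =>
      intro hd
      have hd2 : List.IsChain (· > ·) (a::rest) := (List.isChain_cons_cons.mp hd).2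
      rw [redR_keep hd hC, remAux_cc_neg hC]
      have := ih2 hd2
      simp only [List.length_cons] at this ⊢
      omega

lemma even_card_remAux : ∀ {u : List ℕ}, List.IsChain (· > ·) u →
    Even (remAux u).card := by
  intro u
  induction u using remAux.induct with
  | case1 => intro _; simp [remAux]
  | case2 x => intro _; simp [remAux]
  | case3 b a rest hC ih =>
      intro hd
      have hba : a < b := (List.isChain_cons_cons.mp hd).1
      have hd2 : List.IsChain (· > ·) (a::rest) := (List.isChain_cons_cons.mp hd).2
      have hd3 : List.IsChain (· > ·) rest := hd2.tail
      have hb_not : b ∉ remAux rest := fun h => by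
        have := mem_lt_head hd2 (mem_of_mem_remAux h); omega
      have ha_not : a ∉ insert b (remAux rest) := by
        simp only [Finset.mem_insert]
        rintro (rfl | h)
        · omega
        · have := mem_lt_head hd2 (mem_of_mem_remAux h); omega
      rw [remAux_cc_pos hC, Finset.card_insert_of_notMem ha_not,
        Finset.card_insert_of_notMem hb_not]
      rcases ih hd3 with ⟨k, hk⟩
      exact ⟨k + 1, by omega⟩
  | case4 b a rest hC ih ih2 =>
      intro hd
      rw [remAux_cc_neg hC]
      exact ih2 (List.isChain_cons_cons.mp hd).2

end RedTheory
section RedInj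

lemma inv_red : ∀ {u : List ℕ}, List.IsChain (· > ·) u → (∀ x ∈ u, 1 ≤ x) → u ≠ [] →
    2 * u.length ≤ u.headD 0 + (remAux u).card + (u.headD 0) % 2 := by
  intro u
  induction u using remAux.induct with
  | case1 => intro _ _ h; exact absurd rfl h
  | case2 x =>
      intro _ hpos _
      have hx : 1 ≤ x := hpos x (by simp)
      simp only [remAux, List.length_cons, List.length_nil, List.headD_cons, Finset.card_empty]
      omega
  | case3 b a rest hC ih =>
      intro hd hpos _
      have hba : a < b := (List.isChain_cons_cons.mp hd).1
      have hd2 : List.IsChain (· > ·) (a::rest) := (List.isChain_cons_cons.mp hd).2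
      have hd3 : List.IsChain (· > ·) rest := hd2.tail
      have hb2 : b % 2 = 0 := Nat.even_iff.mp hC.1
      rw [remAux_cc_pos hC]
      have hb_not : b ∉ remAux rest := fun h => by
        have := mem_lt_head hd2 (mem_of_mem_remAux h); omega
      have ha_not : a ∉ insert b (remAux rest) := by
        simp only [Finset.mem_insert]
        rintro (rfl | h)
        · omega
        · have := mem_lt_head hd2 (mem_of_mem_remAux h); omega
      rw [Finset.card_insert_of_notMem ha_not, Finset.card_insert_of_notMem hb_not]
      have hab : a + 1 = b := hC.2.1
      match rest with
      | [] =>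
          have ha1 : 1 ≤ a := hpos a (by simp)
          simp only [List.length_cons, List.length_nil, List.headD_cons, remAux,
            Finset.card_empty]
          omega
      | hr :: r₂ =>
          have hahr : hr < a := mem_lt_head hd2 (by simp)
          have ihh := ih (hd3) (fun x hx => hpos x (by simp [hx])) (by simp)
          simp only [List.headD_cons, List.length_cons] at ihh ⊢
          omega
  | case4 b a rest hC ih ih2 =>
      intro hd hpos _
      have hba : a < b := (List.isChain_cons_cons.mp hd).1
      have hd2 : List.IsChain (· > ·) (a::rest) := (List.isChain_cons_cons.mp hd).2
      rw [remAux_cc_neg hC]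
      have ihh := ih2 hd2 (fun x hx => hpos x (by simp at hx ⊢; tauto)) (by simp)
      simp only [List.headD_cons, List.length_cons] at ihh ⊢
      by_cases hb : Even b
      · have hb2 : b % 2 = 0 := Nat.even_iff.mp hb
        by_cases hab : a + 1 = b
        · have hnum : ¬ (b + (remAux rest).card + 1 < 2 * (rest.length + 2)) := by tauto
          have ha2 : a % 2 = 1 := by omega
          have hkk : remAux (a :: rest) = remAux rest := by
            match rest with
            | [] => rfl
            | c :: r₂ =>
                exact remAux_cc_neg (fun hcc => by
                  have := Nat.even_iff.mp hcc.1; omega)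
          rw [hkk]
          have hd3 : List.IsChain (· > ·) rest := hd2.tail
          have hek := Nat.even_iff.mp (even_card_remAux hd3)
          rw [hkk] at ihh
          omega
        · omega
      · have hb2 : b % 2 = 1 := Nat.odd_iff.mp (Nat.not_even_iff_odd.mp hb)
        omega

/-- if the removal condition holds, the value `b` is forced -/
lemma forced_b {b a : ℕ} {r : List ℕ} (hch : List.IsChain (· > ·) (a :: r))
    (hpos : ∀ x ∈ a :: r, 1 ≤ x)
    (hbe : Even b) (hab1 : a + 1 = b)
    (hnum : b + (remAux r).card + 1 < 2 * (r.length + 2)) :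
    b + (remAux r).card = 2 * r.length + 2 := by
  have hb2 : b % 2 = 0 := Nat.even_iff.mp hbe
  have hch2 : List.IsChain (· > ·) r := hch.tail
  have hek := Nat.even_iff.mp (even_card_remAux hch2)
  have hpa : 1 ≤ a := hpos a (by simp)
  match r with
  | [] =>
      simp only [remAux, Finset.card_empty, List.length_nil] at hnum ⊢
      omega
  | hr :: r₂ =>
      have hahr : hr < a := mem_lt_head hch (by simp)
      have hinv := inv_red hch2 (fun x hx => hpos x (by simp [hx])) (by simp)
      simp only [List.headD_cons, List.length_cons] at hinv hnum hek ⊢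
      omega

lemma redR_inj : ∀ (n : ℕ), ∀ {u v : List ℕ}, u.length = n →
    List.IsChain (· > ·) u → List.IsChain (· > ·) v →
    (∀ x ∈ u, 1 ≤ x) → (∀ x ∈ v, 1 ≤ x) → u.length = v.length →
    redR u = redR v → u = v := by
  intro n
  induction n using Nat.strong_induction_on with
  | _ n ih =>
    intro u v hn hu hv hpu hpv hlen h
    match u, v with
    | [], [] => rfl
    | [x], [y] =>
        rw [redR_single, redR_single] at h
        simpa using h
    | [], y :: v' => simp at hlen
    | u, [] => rw [List.length_nil] at hlen; rw [List.length_eq_zero_iff] at hlen; exact hlen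
    | [x], b' :: a' :: r' => simp at hlen
    | b :: a :: r, [y] => simp at hlen
    | b :: a :: r, b' :: a' :: r' =>
        have hba : a < b := (List.isChain_cons_cons.mp hu).1
        have hu2 : List.IsChain (· > ·) (a::r) := (List.isChain_cons_cons.mp hu).2
        have hu3 : List.IsChain (· > ·) r := hu2.tail
        have hba' : a' < b' := (List.isChain_cons_cons.mp hv).1
        have hv2 : List.IsChain (· > ·) (a'::r') := (List.isChain_cons_cons.mp hv).2
        have hv3 : List.IsChain (· > ·) r' := hv2.tail
        simp only [List.length_cons] at hn hlen
        by_cases hCu : Even b ∧ a + 1 = b ∧ b + (remAux r).card + 1 < 2 * (r.length + 2) <;>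
        by_cases hCv : Even b' ∧ a' + 1 = b' ∧ b' + (remAux r').card + 1 < 2 * (r'.length + 2)
        · -- both removal
          rw [redR_removal hu hCu, redR_removal hv hCv] at h
          have hrr : r = r' := by
            refine ih r.length (by omega) rfl hu3 hv3
              (fun x hx => hpu x (by simp [hx])) (fun x hx => hpv x (by simp [hx]))
              (by omega) h
          subst hrr
          have e1 := forced_b hu2 (fun x hx => hpu x (by simp at hx ⊢; tauto))
            hCu.1 hCu.2.1 hCu.2.2
          have e2 := forced_b hv2 (fun x hx => hpv x (by simp at hx ⊢; tauto))
            hCv.1 hCv.2.1 hCv.2.2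
          have hb : b = b' := by omega
          have ha : a = a' := by omega
          rw [hb, ha]
        · -- u removal, v keep : contradiction
          exfalso
          rw [redR_removal hu hCu, redR_keep hv hCv] at h
          have hbmem : b' ∈ redR r := by rw [h]; simp
          have hbr : b' ∈ r := (List.filter_sublist (l := r)).mem hbmem
          have hb'a : b' < a := mem_lt_head hu2 hbr
          have hinv := inv_red hv hpv (by simp)
          have hcv := card_remAux_add hv
          have hcr := card_remAux_add hu3
          rw [redR_keep hv hCv, ← h] at hcv
          simp only [List.headD_cons, List.length_cons] at hinv hcv
          have hCu2 := hCu.2.1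
          have hCu3 := hCu.2.2
          omega
        · -- u keep, v removal : symmetric
          exfalso
          rw [redR_keep hu hCu, redR_removal hv hCv] at h
          have hbmem : b ∈ redR r' := by rw [← h]; simp
          have hbr : b ∈ r' := (List.filter_sublist (l := r')).mem hbmem
          have hb'a : b < a' := mem_lt_head hv2 hbr
          have hinv := inv_red hu hpu (by simp)
          have hcv := card_remAux_add hu
          have hcr := card_remAux_add hv3
          rw [redR_keep hu hCu, h] at hcv
          simp only [List.headD_cons, List.length_cons] at hinv hcv
          have hCv2 := hCv.2.1
          have hCv3 := hCv.2.2
          omega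
        · -- both keep
          rw [redR_keep hu hCu, redR_keep hv hCv] at h
          injection h with hb ht
          have : (a :: r) = (a' :: r') := by
            refine ih (a :: r).length (by simp; omega) rfl hu2 hv2
              (fun x hx => hpu x (by simp at hx ⊢; tauto))
              (fun x hx => hpv x (by simp at hx ⊢; tauto))
              (by simp; omega) ht
          rw [hb, this]

lemma redSeq_eq_reverse (l : List ℕ) : (redR l.reverse).reverse = redSeq l := by
  unfold redR redSeq remSet
  rw [List.filter_reverse, List.reverse_reverse]

lemma redSeq_inj {c₁ c₂ : List ℕ} (h₁ : List.IsChain (· < ·) c₁)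
    (h₂ : List.IsChain (· < ·) c₂) (hp₁ : ∀ x ∈ c₁, 1 ≤ x) (hp₂ : ∀ x ∈ c₂, 1 ≤ x)
    (hlen : c₁.length = c₂.length) (h : redSeq c₁ = redSeq c₂) : c₁ = c₂ := by
  have h' : redR c₁.reverse = redR c₂.reverse := by
    have := congrArg List.reverse h
    rw [← redSeq_eq_reverse, ← redSeq_eq_reverse] at this
    simpa using this
  have hc1 : List.IsChain (· > ·) c₁.reverse := by
    rw [List.isChain_reverse]; exact h₁
  have hc2 : List.IsChain (· > ·) c₂.reverse := by
    rw [List.isChain_reverse]; exact h₂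
  have := redR_inj c₁.reverse.length rfl hc1 hc2
    (fun x hx => hp₁ x (by simpa using hx)) (fun x hx => hp₂ x (by simpa using hx))
    (by simpa using hlen) h'
  have := congrArg List.reverse this
  simpa using this

end RedInj
section Insertion

/-- domination between adjacent columns -/
def dom (c c' : List ℕ) : Prop :=
  c'.length ≤ c.length ∧ ∀ r < c'.length, c.getD r 0 ≤ c'.getD r 0

/-- tableau property without entry bounds -/
def Tab (T : List (List ℕ)) : Prop :=
  (∀ c ∈ T, c ≠ []) ∧ (∀ c ∈ T, c.IsChain (· < ·)) ∧ T.IsChain dom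

lemma isTableau_tab {m : ℕ} {T : List (List ℕ)} (h : IsTableau m T) : Tab T :=
  ⟨h.1, h.2.1, h.2.2.2⟩

lemma tab_tail {c : List ℕ} {rest : List (List ℕ)} (h : Tab (c :: rest)) : Tab rest :=
  ⟨fun d hd => h.1 d (by simp [hd]), fun d hd => h.2.1 d (by simp [hd]), h.2.2.tail⟩

/-- column shape of a tableau -/
def cshape (T : List (List ℕ)) : List ℕ := T.map List.length

/-- index of the column receiving the new box -/
def ncol (w : ℕ) : List (List ℕ) → ℕ
  | [] => 0
  | c :: rest =>
    match c.dropWhile (fun y => decide (y < w)) with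
    | [] => 0
    | x :: _ => ncol x rest + 1

/-- row of the new box -/
def nrow (w : ℕ) : List (List ℕ) → ℕ
  | [] => 1
  | c :: rest =>
    match c.dropWhile (fun y => decide (y < w)) with
    | [] => c.length + 1
    | x :: _ => nrow x rest

/-- increment shape at position `j` -/
def bump (s : List ℕ) (j : ℕ) : List ℕ :=
  if j < s.length then s.set j (s.getD j 0 + 1) else s ++ [1]

lemma bump_cons (a : ℕ) (s : List ℕ) (j : ℕ) :
    bump (a :: s) (j + 1) = a :: bump s j := by
  unfold bump
  by_cases hj : j < s.length
  · rw [if_pos (by simp; omega), if_pos hj]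
    simp
  · rw [if_neg (by simp; omega), if_neg hj]
    simp

lemma dropWhile_cons_false {p : ℕ → Bool} :
    ∀ {ls : List ℕ} {x : ℕ} {xs : List ℕ}, List.dropWhile p ls = x :: xs → p x = false := by
  intro ls
  induction ls with
  | nil => intro x xs h; simp [List.dropWhile] at h
  | cons a l ih =>
      intro x xs h
      by_cases hp : p a
      · rw [List.dropWhile_cons_of_pos hp] at h; exact ih h
      · rw [List.dropWhile_cons_of_neg hp] at h
        injection h with h1 _
        rw [← h1]
        simpa using hp

/-- decomposition facts from a successful dropWhile -/
lemma dropWhile_facts {w x : ℕ} {c c₃ : List ℕ}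
    (h : c.dropWhile (fun y => decide (y < w)) = x :: c₃) :
    c = c.takeWhile (fun y => decide (y < w)) ++ x :: c₃ ∧
    (∀ y ∈ c.takeWhile (fun y => decide (y < w)), y < w) ∧ w ≤ x := by
  refine ⟨by rw [← h, List.takeWhile_append_dropWhile], fun y hy => ?_, ?_⟩
  · have := List.mem_takeWhile_imp hy
    simpa using this
  · have := dropWhile_cons_false h
    simpa using this

lemma cshape_colInsert (w : ℕ) (T : List (List ℕ)) :
    cshape (colInsert w T) = bump (cshape T) (ncol w T) := by
  induction T generalizing w with
  | nil => simp [colInsert, cshape, ncol, bump]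
  | cons c rest ih =>
    cases hdw : c.dropWhile (fun y => decide (y < w)) with
    | nil =>
        simp only [colInsert, ncol, hdw]
        simp [cshape, bump]
    | cons x c₃ =>
        simp only [colInsert, ncol, hdw]
        have hlen : (c.takeWhile (fun y => decide (y < w)) ++ w :: c₃).length = c.length := by
          conv_rhs => rw [(dropWhile_facts hdw).1]
          simp
        simp only [cshape, List.map_cons] at *
        rw [hlen, ih, bump_cons]

lemma nrow_eq (w : ℕ) (T : List (List ℕ)) :
    nrow w T = (cshape (colInsert w T)).getD (ncol w T) 0 := by
  induction T generalizing w with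
  | nil => simp [colInsert, cshape, ncol, nrow]
  | cons c rest ih =>
    cases hdw : c.dropWhile (fun y => decide (y < w)) with
    | nil =>
        simp only [colInsert, ncol, nrow, hdw]
        simp [cshape]
    | cons x c₃ =>
        simp only [colInsert, ncol, nrow, hdw]
        simp only [cshape, List.map_cons, List.getD_cons_succ]
        exact ih x

lemma sum_bump (s : List ℕ) (j : ℕ) : (bump s j).sum = s.sum + 1 := by
  induction s generalizing j with
  | nil => simp [bump]
  | cons a s ih =>
    cases j with
    | zero => simp [bump]; omega
    | succ j => rw [bump_cons]; simp [ih]; omega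

end Insertion
section TabPreserve

lemma getD_mem {l : List ℕ} {r : ℕ} (h : r < l.length) : l.getD r 0 ∈ l := by
  rw [List.getD_eq_getElem _ _ h]; exact List.getElem_mem h

lemma getD_mid (t : List ℕ) (x : ℕ) (c₃ : List ℕ) :
    (t ++ x :: c₃).getD t.length 0 = x := by
  rw [List.getD_append_right _ _ _ _ le_rfl]; simp

lemma getD_low {t : List ℕ} {r : ℕ} (x : ℕ) (c₃ : List ℕ) (h : r < t.length) :
    (t ++ x :: c₃).getD r 0 = t.getD r 0 :=
  List.getD_append _ _ _ _ h

lemma getD_high {t : List ℕ} {r : ℕ} (x : ℕ) (c₃ : List ℕ) (h : t.length < r) :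
    (t ++ x :: c₃).getD r 0 = c₃.getD (r - t.length - 1) 0 := by
  obtain ⟨k, rfl⟩ : ∃ k, r = t.length + (k + 1) := ⟨r - t.length - 1, by omega⟩
  rw [List.getD_append_right _ _ _ _ (by omega)]
  have h1 : t.length + (k + 1) - t.length = k + 1 := by omega
  rw [h1]
  simp

lemma getD_mono {t : List ℕ} {w x : ℕ} (c₃ : List ℕ) (hwx : w ≤ x) (r : ℕ) :
    (t ++ w :: c₃).getD r 0 ≤ (t ++ x :: c₃).getD r 0 := by
  rcases lt_trichotomy r t.length with h | h | h
  · rw [getD_low _ _ h, getD_low _ _ h]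
  · subst h; rw [getD_mid, getD_mid]; exact hwx
  · rw [getD_high _ _ h, getD_high _ _ h]

lemma chain_lt_append_singleton {c : List ℕ} {w : ℕ} (hc : c.IsChain (· < ·))
    (hall : ∀ y ∈ c, y < w) : (c ++ [w]).IsChain (· < ·) := by
  rw [List.isChain_iff_pairwise] at hc ⊢
  rw [List.pairwise_append]
  exact ⟨hc, by simp, fun a ha b hb => by simp at hb; subst hb; exact hall a ha⟩

lemma chain_lt_replace {t c₃ : List ℕ} {x w : ℕ}
    (hc : (t ++ x :: c₃).IsChain (· < ·)) (ht : ∀ y ∈ t, y < w) (hwx : w ≤ x) :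
    (t ++ w :: c₃).IsChain (· < ·) := by
  rw [List.isChain_iff_pairwise] at hc ⊢
  rw [List.pairwise_append] at hc ⊢
  obtain ⟨h1, h2, h3⟩ := hc
  rw [List.pairwise_cons] at h2 ⊢
  refine ⟨h1, ⟨fun z hz => lt_of_le_of_lt hwx (h2.1 z hz), h2.2⟩, ?_⟩
  intro a ha b hb
  simp only [List.mem_cons] at hb
  rcases hb with rfl | hb
  · exact ht a ha
  · exact h3 a ha b (by simp [hb])

lemma mem_lt_of_chain_mid {t c₃ : List ℕ} {x : ℕ}
    (hc : (t ++ x :: c₃).IsChain (· < ·)) : ∀ y ∈ c₃, x < y := by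
  rw [List.isChain_iff_pairwise, List.pairwise_append] at hc
  have := hc.2.1
  rw [List.pairwise_cons] at this
  exact this.1

lemma mem_lt_of_chain_take {t c₃ : List ℕ} {x : ℕ}
    (hc : (t ++ x :: c₃).IsChain (· < ·)) : ∀ y ∈ t, y < x := by
  rw [List.isChain_iff_pairwise, List.pairwise_append] at hc
  exact fun y hy => hc.2.2 y hy x (by simp)

lemma colInsert_ne_nil (w : ℕ) (T : List (List ℕ)) : colInsert w T ≠ [] := by
  cases T with
  | nil => simp [colInsert]
  | cons c rest =>
      cases hdw : c.dropWhile (fun y => decide (y < w)) <;> simp [colInsert, hdw]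

lemma tab_dom_head {c : List ℕ} {rest : List (List ℕ)} (h : Tab (c :: rest)) :
    dom c (rest.headD []) := by
  cases rest with
  | nil => exact ⟨by simp, by simp⟩
  | cons o rr =>
      have := h.2.2
      rw [List.isChain_cons] at this
      simpa using this.1 o (by simp)

/-- specification of the head of `colInsert x rest` -/
def headSpec (x : ℕ) (o H : List ℕ) : Prop :=
  H.length ≤ o.length + 1 ∧ (H.length = o.length + 1 → ∀ y ∈ o, y < x) ∧
  ∀ r < H.length, (r < o.length ∧ o.getD r 0 ≤ H.getD r 0) ∨
      (H.getD r 0 = x ∧ ∀ r' < r, r' < o.length ∧ o.getD r' 0 < x)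

lemma headSpec_colInsert (x : ℕ) (rest : List (List ℕ)) :
    headSpec x (rest.headD []) ((colInsert x rest).headD []) := by
  cases rest with
  | nil =>
      refine ⟨by simp [colInsert], by simp, ?_⟩
      intro r hr
      simp only [colInsert, List.headD_cons, List.length_cons, List.length_nil] at hr ⊢
      interval_cases r
      · exact Or.inr ⟨rfl, by omega⟩
  | cons o rr =>
      cases hdw : o.dropWhile (fun y => decide (y < x)) with
      | nil =>
          have hall : ∀ y ∈ o, y < x := by
            rw [List.dropWhile_eq_nil_iff] at hdw
            intro y hy; simpa using hdw y hy
          simp only [colInsert, hdw, List.headD_cons]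
          refine ⟨by simp, fun _ => hall, ?_⟩
          intro r hr
          simp only [List.length_append, List.length_cons, List.length_nil] at hr
          rcases lt_or_ge r o.length with h | h
          · exact Or.inl ⟨h, by rw [getD_low x [] h]⟩
          · have : r = o.length := by omega
            subst this
            refine Or.inr ⟨getD_mid o x [], fun r' hr' => ⟨hr', ?_⟩⟩
            exact hall _ (getD_mem hr')
      | cons z o₃ =>
          obtain ⟨hde, htl, hzx⟩ := dropWhile_facts hdw
          simp only [colInsert, hdw, List.headD_cons]
          set t := o.takeWhile (fun y => decide (y < x)) with hts
          have hlen : (t ++ x :: o₃).length = o.length := by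
            conv_rhs => rw [hde]
            simp
          refine ⟨by rw [hlen]; omega, by rw [hlen]; intro hc; omega, ?_⟩
          intro r hr
          rw [hlen] at hr
          rcases lt_trichotomy r t.length with h | h | h
          · refine Or.inl ⟨hr, ?_⟩
            rw [getD_low x o₃ h]
            conv_lhs => rw [hde]
            rw [getD_low z o₃ h]
          · subst h
            refine Or.inr ⟨getD_mid t x o₃, fun r' hr' => ⟨by omega, ?_⟩⟩
            conv_lhs => rw [hde]
            rw [getD_low z o₃ hr']
            exact htl _ (getD_mem hr')
          · refine Or.inl ⟨hr, ?_⟩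
            rw [getD_high x o₃ h]
            conv_lhs => rw [hde]
            rw [getD_high z o₃ h]

/-- the crucial domination step -/
lemma dom_step {c t c₃ o H : List ℕ} {x w : ℕ}
    (hde : c = t ++ x :: c₃) (ht : ∀ y ∈ t, y < w) (hwx : w ≤ x)
    (hdom : dom c o) (hhs : headSpec x o H) : dom (t ++ w :: c₃) H := by
  have hlc : c.length = (t ++ w :: c₃).length := by rw [hde]; simp
  have hi₂ : t.length < c.length := by rw [hde]; simp
  constructor
  · -- length
    rcases Nat.lt_or_ge H.length (o.length + 1) with h | h
    · have := hdom.1; omega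
    · have hHlen : H.length = o.length + 1 := by have := hhs.1; omega
      have hall := hhs.2.1 hHlen
      -- o.length ≤ t.length, hence H.length ≤ c.length
      rcases Nat.lt_or_ge t.length o.length with h2 | h2
      · exfalso
        have h3 := hdom.2 t.length h2
        rw [hde, getD_mid] at h3
        exact absurd h3 (by have := hall _ (getD_mem h2); omega)
      · omega
  · intro r hr
    rcases hhs.2.2 r hr with ⟨hro, hoH⟩ | ⟨hHx, hmin⟩
    · calc (t ++ w :: c₃).getD r 0 ≤ (t ++ x :: c₃).getD r 0 := getD_mono c₃ hwx r
        _ ≤ o.getD r 0 := by rw [← hde]; exact hdom.2 r hro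
        _ ≤ H.getD r 0 := hoH
    · rw [hHx]
      have hri : r ≤ t.length := by
        by_contra hcon
        push_neg at hcon
        obtain ⟨h1, h2⟩ := hmin t.length hcon
        have h3 := hdom.2 t.length h1
        rw [hde, getD_mid] at h3
        omega
      rcases Nat.lt_or_ge r t.length with h | h
      · rw [getD_low w c₃ h]
        have := ht _ (getD_mem h)
        omega
      · have : r = t.length := by omega
        subst this
        rw [getD_mid]
        exact hwx

lemma tab_colInsert : ∀ {T : List (List ℕ)}, Tab T → ∀ w, Tab (colInsert w T) := by
  intro T
  induction T with
  | nil =>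
      intro _ w
      exact ⟨by simp [colInsert], by simp [colInsert], by simp [colInsert]⟩
  | cons c rest ih =>
      intro h w
      have hrest : Tab rest := tab_tail h
      have hcc : c.IsChain (· < ·) := h.2.1 c (by simp)
      cases hdw : c.dropWhile (fun y => decide (y < w)) with
      | nil =>
          have hall : ∀ y ∈ c, y < w := by
            rw [List.dropWhile_eq_nil_iff] at hdw
            intro y hy; simpa using hdw y hy
          simp only [colInsert, hdw]
          refine ⟨?_, ?_, ?_⟩
          · intro d hd
            rcases List.mem_cons.mp hd with rfl | hd
            · simp
            · exact h.1 d (by simp [hd])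
          · intro d hd
            rcases List.mem_cons.mp hd with rfl | hd
            · exact chain_lt_append_singleton hcc hall
            · exact h.2.1 d (by simp [hd])
          · rw [List.isChain_cons]
            refine ⟨?_, h.2.2.tail⟩
            intro o ho
            have hdom := tab_dom_head h
            cases rest with
            | nil => simp at ho
            | cons o' rr =>
                simp at ho
                subst ho
                simp only [List.headD_cons] at hdom
                refine ⟨by have := hdom.1; simp; omega, fun r hrr => ?_⟩
                rw [List.getD_append _ _ _ _ (by have := hdom.1; omega)]
                exact hdom.2 r hrr
      | cons x c₃ =>
          obtain ⟨hde, htl, hwx⟩ := dropWhile_facts hdw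
          set t := c.takeWhile (fun y => decide (y < w)) with hts
          simp only [colInsert, hdw]
          have ihx := ih hrest x
          refine ⟨?_, ?_, ?_⟩
          · intro d hd
            rcases List.mem_cons.mp hd with rfl | hd
            · simp
            · exact ihx.1 d hd
          · intro d hd
            rcases List.mem_cons.mp hd with rfl | hd
            · exact chain_lt_replace (hde ▸ hcc) htl hwx
            · exact ihx.2.1 d hd
          · rw [List.isChain_cons]
            refine ⟨?_, ihx.2.2⟩
            intro H hH
            have hHD : H = (colInsert x rest).headD [] := by
              cases hM : colInsert x rest with
              | nil => exact absurd hM (colInsert_ne_nil x rest)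
              | cons a b => rw [hM] at hH; simp at hH; simp [hH]
            rw [hHD]
            exact dom_step hde htl hwx (tab_dom_head h) (headSpec_colInsert x rest)

end TabPreserve
section Bumping

lemma takeWhile_length_le_of_ge {c : List ℕ} {w i : ℕ} (hi : i < c.length)
    (hwi : w ≤ c.getD i 0) :
    (c.takeWhile (fun y => decide (y < w))).length ≤ i := by
  by_contra hcon
  push_neg at hcon
  have hmem : c.getD i 0 ∈ c.takeWhile (fun y => decide (y < w)) := by
    have h1 : (c.takeWhile (fun y => decide (y < w))).getD i 0 ∈
        c.takeWhile (fun y => decide (y < w)) := getD_mem hcon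
    have h2 : (c.takeWhile (fun y => decide (y < w))).getD i 0 = c.getD i 0 := by
      conv_rhs => rw [← List.takeWhile_append_dropWhile (p := fun y => decide (y < w)) (l := c)]
      rw [List.getD_append _ _ _ _ hcon]
    rwa [h2] at h1
  have := List.mem_takeWhile_imp hmem
  simp only [decide_eq_true_eq] at this
  omega

/-- row bound: if the head column has an entry `≥ w` at index `i`,
the new box lands in row `≤ i+1`. -/
lemma nrow_le : ∀ {T : List (List ℕ)}, Tab T → ∀ {w i : ℕ},
    (i < (T.headD []).length → w ≤ (T.headD []).getD i 0) → nrow w T ≤ i + 1 := by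
  intro T
  induction T with
  | nil => intro _ w i _; simp only [nrow]; omega
  | cons c rest ih =>
      intro h w i hi
      simp only [List.headD_cons] at hi
      cases hdw : c.dropWhile (fun y => decide (y < w)) with
      | nil =>
          have hall : ∀ y ∈ c, y < w := by
            rw [List.dropWhile_eq_nil_iff] at hdw
            intro y hy; simpa using hdw y hy
          simp only [nrow, hdw]
          rcases Nat.lt_or_ge i c.length with hlt | hge
          · exact absurd (hi hlt) (by have := hall _ (getD_mem hlt); omega)
          · omega
      | cons x c₃ =>
          obtain ⟨hde, htl, hwx⟩ := dropWhile_facts hdw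
          simp only [nrow, hdw]
          set t := c.takeWhile (fun y => decide (y < w)) with hts
          have hi₂ : t.length < c.length := by
            rw [hde]; simp only [List.length_append, List.length_cons]; omega
          have hi₂i : t.length ≤ i := by
            rcases Nat.lt_or_ge i c.length with hlt | hge
            · exact takeWhile_length_le_of_ge hlt (hi hlt)
            · omega
          have hxt : c.getD t.length 0 = x := by
            conv_lhs => rw [hde]
            exact getD_mid t x c₃
          have hdom := tab_dom_head h
          have step : t.length < (rest.headD []).length →
              x ≤ (rest.headD []).getD t.length 0 := by
            intro hlt
            have := hdom.2 t.length hlt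
            rwa [hxt] at this
          have := ih (tab_tail h) step
          omega

/-- bumping lemma : inserting a strictly larger value right after
gives a strictly lower new box -/
lemma nrow_lt : ∀ {T : List (List ℕ)}, Tab T → ∀ {w w' : ℕ}, w < w' →
    nrow w T < nrow w' (colInsert w T) := by
  intro T
  induction T with
  | nil =>
      intro _ w w' hww
      have : List.dropWhile (fun y => decide (y < w')) [w] = [] := by
        simp [List.dropWhile, hww]
      simp [colInsert, nrow, this]
  | cons c rest ih =>
      intro h w w' hww
      have hcc : c.IsChain (· < ·) := h.2.1 c (by simp)
      cases hdw : c.dropWhile (fun y => decide (y < w)) with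
      | nil =>
          have hall : ∀ y ∈ c, y < w := by
            rw [List.dropWhile_eq_nil_iff] at hdw
            intro y hy; simpa using hdw y hy
          have hall' : List.dropWhile (fun y => decide (y < w')) (c ++ [w]) = [] := by
            rw [List.dropWhile_eq_nil_iff]
            intro y hy
            simp only [List.mem_append, List.mem_cons] at hy
            rcases hy with hy | hy
            · have := hall y hy; simp; omega
            · simp at hy; subst hy; simp; omega
          simp only [colInsert, nrow, hdw, hall']
          simp
      | cons x c₃ =>
          obtain ⟨hde, htl, hwx⟩ := dropWhile_facts hdw
          set t := c.takeWhile (fun y => decide (y < w)) with hts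
          have hdw2 : List.dropWhile (fun y => decide (y < w')) (t ++ w :: c₃) =
              List.dropWhile (fun y => decide (y < w')) c₃ := by
            have h1 : t ++ w :: c₃ = (t ++ [w]) ++ c₃ := by simp
            rw [h1, List.dropWhile_append]
            have h2 : List.dropWhile (fun y => decide (y < w')) (t ++ [w]) = [] := by
              rw [List.dropWhile_eq_nil_iff]
              intro y hy
              simp only [List.mem_append, List.mem_cons] at hy
              rcases hy with hy | hy
              · have := htl y hy; simp; omega
              · simp at hy; subst hy; simp; omega
            rw [h2]
            simp
          cases hdw3 : List.dropWhile (fun y => decide (y < w')) c₃ with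
          | nil =>
              simp only [colInsert, nrow, hdw, ← hts, hdw2, hdw3]
              -- new box at bottom of first column, row = |t ++ w :: c₃| + 1 = |c| + 1
              have hlen : (t ++ w :: c₃).length = c.length := by
                rw [hde]; simp
              rw [hlen]
              -- nrow x rest ≤ t.length + 1 ≤ c.length
              have hi₂ : t.length < c.length := by
                rw [hde]; simp only [List.length_append, List.length_cons]; omega
              have hxt : c.getD t.length 0 = x := by
                conv_lhs => rw [hde]
                exact getD_mid t x c₃
              have hdom := tab_dom_head h
              have step : t.length < (rest.headD []).length →
                  x ≤ (rest.headD []).getD t.length 0 := by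
                intro hlt
                have := hdom.2 t.length hlt
                rwa [hxt] at this
              have := nrow_le (tab_tail h) step
              omega
          | cons x' c₄ =>
              simp only [colInsert, nrow, hdw, ← hts, hdw2, hdw3]
              -- recurse
              have hx' : x < x' := by
                have hmem : x' ∈ c₃ := by
                  have : x' ∈ List.dropWhile (fun y => decide (y < w')) c₃ := by
                    rw [hdw3]; simp
                  exact List.dropWhile_sublist _ |>.mem this
                exact mem_lt_of_chain_mid (hde ▸ hcc) x' hmem
              exact ih (tab_tail h) hx'

end Bumping
section SingleStep

lemma takeWhile_mid {p : ℕ → Bool} : ∀ {t : List ℕ} {w : ℕ} {c₃ : List ℕ},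
    (∀ y ∈ t, p y = true) → p w = true → (∀ z, c₃.head? = some z → p z = false) →
    List.takeWhile p (t ++ w :: c₃) = t ++ [w] := by
  intro t
  induction t with
  | nil =>
      intro w c₃ _ hw hc
      simp only [List.nil_append]
      rw [List.takeWhile_cons_of_pos hw]
      cases c₃ with
      | nil => simp
      | cons z c₄ =>
          rw [List.takeWhile_cons_of_neg (by simp [hc z rfl])]
  | cons a t ih =>
      intro w c₃ ht hw hc
      simp only [List.cons_append]
      rw [List.takeWhile_cons_of_pos (ht a (by simp))]
      rw [ih (fun y hy => ht y (by simp [hy])) hw hc]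

/-- single column-insertion is injective given equal target column and shapes -/
lemma colInsert_inj : ∀ {T T' : List (List ℕ)}, Tab T → Tab T' → ∀ {w w' : ℕ},
    colInsert w T = colInsert w' T' → ncol w T = ncol w' T' → cshape T = cshape T' →
    w = w' ∧ T = T' := by
  intro T
  induction T with
  | nil =>
      intro T' _ _ w w' he _ hsh
      have hT' : T' = [] := by
        cases T' with
        | nil => rfl
        | cons c' r' => simp [cshape] at hsh
      subst hT'
      simp only [colInsert] at he
      injection he with h1 _
      injection h1 with h2 _
      exact ⟨h2, rfl⟩
  | cons c rest ih =>
      intro T' hT hT' w w' he hnc hsh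
      cases T' with
      | nil => simp [cshape] at hsh
      | cons c' rest' =>
        simp only [cshape, List.map_cons, List.cons.injEq] at hsh
        obtain ⟨hlcc, hshr⟩ := hsh
        have hcc : c.IsChain (· < ·) := hT.2.1 c (by simp)
        have hcc' : c'.IsChain (· < ·) := hT'.2.1 c' (by simp)
        cases hdw : c.dropWhile (fun y => decide (y < w)) with
        | nil =>
            cases hdw' : c'.dropWhile (fun y => decide (y < w')) with
            | nil =>
                simp only [colInsert, hdw, hdw'] at he
                injection he with h1 h2
                obtain ⟨hc, hw⟩ := List.append_inj h1 hlcc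
                injection hw with hw _
                exact ⟨hw, by rw [hc, h2]⟩
            | cons x' c₃' =>
                simp only [ncol, hdw, hdw'] at hnc
                exact absurd hnc (by omega)
        | cons x c₃ =>
            cases hdw' : c'.dropWhile (fun y => decide (y < w')) with
            | nil =>
                simp only [ncol, hdw, hdw'] at hnc
                exact absurd hnc (by omega)
            | cons x' c₃' =>
                obtain ⟨hde, htl, hwx⟩ := dropWhile_facts hdw
                obtain ⟨hde', htl', hwx'⟩ := dropWhile_facts hdw'
                set t := c.takeWhile (fun y => decide (y < w)) with hts
                set t' := c'.takeWhile (fun y => decide (y < w')) with hts'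
                simp only [colInsert, hdw, hdw', List.cons.injEq] at he
                obtain ⟨he1, he2⟩ := he
                simp only [ncol, hdw, hdw'] at hnc
                have hxx : x = x' ∧ rest = rest' :=
                  ih (tab_tail hT) (tab_tail hT') he2 (by omega) hshr
                obtain ⟨hx, hr⟩ := hxx
                subst hx
                subst hr
                -- now recover the first columns
                have hc3 : ∀ z, c₃.head? = some z → decide (z ≤ x) = false := by
                  intro z hz
                  have hmz : z ∈ c₃ := by
                    cases c₃ with
                    | nil => simp at hz
                    | cons a b => simp at hz; simp [hz]
                  have := mem_lt_of_chain_mid (hde ▸ hcc) z hmz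
                  simp; omega
                have hc3' : ∀ z, c₃'.head? = some z → decide (z ≤ x) = false := by
                  intro z hz
                  have hmz : z ∈ c₃' := by
                    cases c₃' with
                    | nil => simp at hz
                    | cons a b => simp at hz; simp [hz]
                  have := mem_lt_of_chain_mid (hde' ▸ hcc') z hmz
                  simp; omega
                have htw : List.takeWhile (fun y => decide (y ≤ x)) (t ++ w :: c₃)
                    = t ++ [w] :=
                  takeWhile_mid (fun y hy => by have := htl y hy; simp; omega)
                    (by simp; omega) hc3
                have htw' : List.takeWhile (fun y => decide (y ≤ x)) (t' ++ w' :: c₃')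
                    = t' ++ [w'] :=
                  takeWhile_mid (fun y hy => by have := htl' y hy; simp; omega)
                    (by simp; omega) hc3'
                have heq2 : t ++ [w] = t' ++ [w'] := by
                  rw [← htw, ← htw', he1]
                have hlt : t.length = t'.length := by
                  have := congrArg List.length heq2
                  simp at this
                  omega
                obtain ⟨htt, hww⟩ := List.append_inj heq2 hlt
                injection hww with hww _
                refine ⟨hww, ?_⟩
                have hc33 : c₃ = c₃' := by
                  rw [← hts, ← hts'] at he1
                  rw [htt, hww] at he1
                  have := List.append_cancel_left he1
                  injection this
                rw [hde, hde', htt, hc33]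
  
end SingleStep
section MultiInsert

lemma insertCol_concat (b : List ℕ) (w : ℕ) (T : List (List ℕ)) :
    insertCol (b ++ [w]) T = colInsert w (insertCol b T) := by
  simp [insertCol, List.foldl_append]

lemma insertCol_cons (w : ℕ) (b : List ℕ) (T : List (List ℕ)) :
    insertCol (w :: b) T = insertCol b (colInsert w T) := rfl

lemma tab_insertCol : ∀ {b : List ℕ} {T : List (List ℕ)}, Tab T → Tab (insertCol b T) := by
  intro b
  induction b with
  | nil => intro T h; exact h
  | cons w b ih => intro T h; rw [insertCol_cons]; exact ih (tab_colInsert h w)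

lemma ncol_le_length (w : ℕ) : ∀ (T : List (List ℕ)), ncol w T ≤ T.length := by
  intro T
  induction T generalizing w with
  | nil => simp [ncol]
  | cons c rest ih =>
      cases hdw : c.dropWhile (fun y => decide (y < w)) with
      | nil => simp [ncol, hdw]
      | cons x c₃ =>
          simp only [ncol, hdw, List.length_cons]
          have := ih x
          omega

lemma bump_getD_self : ∀ {s : List ℕ} {i : ℕ}, i ≤ s.length →
    (bump s i).getD i 0 = s.getD i 0 + 1 := by
  intro s
  induction s with
  | nil =>
      intro i hi
      have : i = 0 := by simpa using hi
      subst this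
      simp [bump]
  | cons a s ih =>
      intro i hi
      cases i with
      | zero => simp [bump]
      | succ i =>
          rw [bump_cons]
          simp only [List.getD_cons_succ]
          exact ih (by simpa using hi)

lemma bump_getD_ne : ∀ {s : List ℕ} {i j : ℕ}, i ≤ s.length → i ≠ j →
    (bump s i).getD j 0 = s.getD j 0 := by
  intro s
  induction s with
  | nil =>
      intro i j hi hij
      have : i = 0 := by simpa using hi
      subst this
      cases j with
      | zero => omega
      | succ j => simp [bump]
  | cons a s ih =>
      intro i j hi hij
      cases i with
      | zero =>
          cases j with
          | zero => omega
          | succ j => simp [bump]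
      | succ i =>
          rw [bump_cons]
          cases j with
          | zero => simp
          | succ j =>
              simp only [List.getD_cons_succ]
              exact ih (by simpa using hi) (by omega)

lemma bump_inj : ∀ {j : ℕ} {s s' : List ℕ}, (∀ y ∈ s, 1 ≤ y) → (∀ y ∈ s', 1 ≤ y) →
    j ≤ s.length → j ≤ s'.length → bump s j = bump s' j → s = s' := by
  intro j
  induction j with
  | zero =>
      intro s s' hs hs' _ _ h
      match s, s' with
      | [], [] => rfl
      | [], a' :: s₂ =>
          exfalso
          have hb1 : bump ([] : List ℕ) 0 = [1] := rfl
          have hb2 : bump (a' :: s₂) 0 = (a' + 1) :: s₂ := by simp [bump]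
          rw [hb1, hb2] at h
          have := hs' a' (by simp)
          injection h with h1 h2
          omega
      | a :: s₂, [] =>
          exfalso
          have hb1 : bump ([] : List ℕ) 0 = [1] := rfl
          have hb2 : bump (a :: s₂) 0 = (a + 1) :: s₂ := by simp [bump]
          rw [hb1, hb2] at h
          have := hs a (by simp)
          injection h with h1 h2
          omega
      | a :: s₂, a' :: s₂' =>
          have hb2 : bump (a :: s₂) 0 = (a + 1) :: s₂ := by simp [bump]
          have hb2' : bump (a' :: s₂') 0 = (a' + 1) :: s₂' := by simp [bump]
          rw [hb2, hb2'] at h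
          injection h with h1 h2
          rw [h2]
          have : a = a' := by omega
          rw [this]
  | succ j ih =>
      intro s s' hs hs' hj hj' h
      match s, s' with
      | a :: s₂, a' :: s₂' =>
          rw [bump_cons, bump_cons] at h
          injection h with h1 h2
          rw [h1, ih (fun y hy => hs y (by simp [hy])) (fun y hy => hs' y (by simp [hy]))
            (by simpa using hj) (by simpa using hj') h2]

lemma length_cshape (T : List (List ℕ)) : (cshape T).length = T.length := by
  simp [cshape]

lemma cshape_colInsert_getD_mono (w : ℕ) (T : List (List ℕ)) (j : ℕ) :
    (cshape T).getD j 0 ≤ (cshape (colInsert w T)).getD j 0 := by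
  rw [cshape_colInsert]
  have hle : ncol w T ≤ (cshape T).length := by rw [length_cshape]; exact ncol_le_length w T
  by_cases hj : ncol w T = j
  · subst hj; rw [bump_getD_self hle]; omega
  · rw [bump_getD_ne hle hj]

lemma cshape_insertCol_getD_mono (b : List ℕ) (T : List (List ℕ)) (j : ℕ) :
    (cshape T).getD j 0 ≤ (cshape (insertCol b T)).getD j 0 := by
  induction b generalizing T with
  | nil => exact le_rfl
  | cons w b ih =>
      rw [insertCol_cons]
      exact le_trans (cshape_colInsert_getD_mono w T j) (ih (colInsert w T))

lemma nrow_eq' (w : ℕ) (T : List (List ℕ)) :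
    nrow w T = (cshape T).getD (ncol w T) 0 + 1 := by
  rw [nrow_eq, cshape_colInsert, bump_getD_self]
  rw [length_cshape]; exact ncol_le_length w T

lemma chain_concat_lt {b : List ℕ} {w : ℕ} (h : (b ++ [w]).IsChain (· < ·)) :
    b.IsChain (· < ·) ∧ ∀ y ∈ b, y < w := by
  rw [List.isChain_iff_pairwise, List.pairwise_append] at h
  refine ⟨List.isChain_iff_pairwise.mpr h.1, fun y hy => h.2.2 y hy w (by simp)⟩

/-- the key growth lemma: all earlier boxes are in strictly higher rows -/
lemma grow : ∀ {b : List ℕ} {T : List (List ℕ)}, Tab T → b.IsChain (· < ·) →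
    ∀ {w : ℕ}, (∀ y ∈ b, y < w) →
    ∀ j, j ≠ ncol w (insertCol b T) →
      (cshape T).getD j 0 < (cshape (colInsert w (insertCol b T))).getD j 0 →
      (cshape (colInsert w (insertCol b T))).getD j 0 <
        (cshape (colInsert w (insertCol b T))).getD (ncol w (insertCol b T)) 0 := by
  intro b
  induction b using List.reverseRecOn with
  | nil =>
      intro T hT _ w _ j hj hlt
      simp only [insertCol, List.foldl_nil] at hj hlt ⊢
      rw [cshape_colInsert, bump_getD_ne (by rw [length_cshape]; exact ncol_le_length w T)
        (fun h => hj h.symm)] at hlt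
      omega
  | append_singleton b₀ u ih =>
      intro T hT hch w hlt j hj hgrow
      obtain ⟨hch₀, hbu⟩ := chain_concat_lt hch
      set V₀ := insertCol b₀ T with hV₀
      have hV₀tab : Tab V₀ := tab_insertCol hT
      rw [insertCol_concat] at hj hgrow ⊢
      set V := colInsert u V₀ with hV
      have hVtab : Tab V := tab_colInsert hV₀tab u
      have huw : u < w := hlt u (by simp)
      have hnr : nrow u V₀ < nrow w V := nrow_lt hV₀tab huw
      have hjs : ncol w V ≤ (cshape V).length := by
        rw [length_cshape]; exact ncol_le_length w V
      have hjs₀ : ncol u V₀ ≤ (cshape V₀).length := by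
        rw [length_cshape]; exact ncol_le_length u V₀
      -- value at the target column of the final shape is nrow w V
      have hfin : (cshape (colInsert w V)).getD (ncol w V) 0 = nrow w V := (nrow_eq w V).symm
      have hfix : (cshape (colInsert w V)).getD j 0 = (cshape V).getD j 0 := by
        rw [cshape_colInsert, bump_getD_ne hjs (fun h => hj h.symm)]
      rw [hfin, hfix]
      by_cases hju : j = ncol u V₀
      · subst hju
        have : (cshape V).getD (ncol u V₀) 0 = nrow u V₀ := (nrow_eq u V₀).symm
        omega
      · have hVj : (cshape V).getD j 0 = (cshape V₀).getD j 0 := by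
          rw [hV, cshape_colInsert, bump_getD_ne hjs₀ (fun h => hju h.symm)]
        rw [hVj]
        have hg : (cshape T).getD j 0 < (cshape (colInsert u V₀)).getD j 0 := by
          rw [cshape_colInsert, bump_getD_ne hjs₀ (fun h => hju h.symm)]
          rw [hfix, hVj] at hgrow
          exact hgrow
        have key := ih hT hch₀ (fun y hy => hbu y hy) j hju hg
        rw [← hV₀, ← hV] at key
        have h2 : (cshape V).getD (ncol u V₀) 0 = nrow u V₀ := by
          rw [hV]; exact (nrow_eq u V₀).symm
        rw [h2, hVj] at key
        omega

lemma cshape_pos {T : List (List ℕ)} (hT : Tab T) : ∀ y ∈ cshape T, 1 ≤ y := by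
  intro y hy
  simp only [cshape, List.mem_map] at hy
  obtain ⟨c, hc, rfl⟩ := hy
  have := hT.1 c hc
  cases c with
  | nil => exact absurd rfl this
  | cons a b => simp

/-- main insertion injectivity -/
lemma insertCol_inj : ∀ (n : ℕ) {b b' : List ℕ} {T T' : List (List ℕ)},
    b.length = n → b'.length = n → b.IsChain (· < ·) → b'.IsChain (· < ·) →
    Tab T → Tab T' → cshape T = cshape T' →
    insertCol b T = insertCol b' T' → b = b' ∧ T = T' := by
  intro n
  induction n with
  | zero =>
      intro b b' T T' hb hb' _ _ _ _ hsh he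
      rw [List.length_eq_zero_iff] at hb hb'
      subst hb; subst hb'
      exact ⟨rfl, he⟩
  | succ n ih =>
      intro b b' T T' hb hb' hch hch' hT hT' hsh he
      rcases b.eq_nil_or_concat with rfl | ⟨b₀, w, rfl⟩
      · simp at hb
      rcases b'.eq_nil_or_concat with rfl | ⟨b₀', w', rfl⟩
      · simp at hb'
      simp only [List.concat_eq_append] at hch hch' hb hb' he ⊢
      obtain ⟨hch₀, hbw⟩ := chain_concat_lt hch
      obtain ⟨hch₀', hbw'⟩ := chain_concat_lt hch'
      rw [insertCol_concat] at he
      rw [insertCol_concat] at he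
      set V := insertCol b₀ T with hVd
      set V' := insertCol b₀' T' with hVd'
      have hVtab : Tab V := tab_insertCol hT
      have hVtab' : Tab V' := tab_insertCol hT'
      have hshf : cshape (colInsert w V) = cshape (colInsert w' V') := by rw [he]
      have hjs : ncol w V ≤ (cshape V).length := by
        rw [length_cshape]; exact ncol_le_length w V
      have hjs' : ncol w' V' ≤ (cshape V').length := by
        rw [length_cshape]; exact ncol_le_length w' V'
      -- the two new-box columns coincide
      have hjj : ncol w V = ncol w' V' := by
        by_contra hne
        -- column ncol w' V' is new w.r.t. cshape T on side 1
        have hnew' : (cshape T).getD (ncol w' V') 0 <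
            (cshape (colInsert w V)).getD (ncol w' V') 0 := by
          rw [hshf, hsh]
          have h1 : (cshape (colInsert w' V')).getD (ncol w' V') 0 = nrow w' V' :=
            (nrow_eq w' V').symm
          rw [h1, nrow_eq' w' V']
          have := cshape_insertCol_getD_mono b₀' T' (ncol w' V')
          rw [← hVd'] at this
          omega
        have hnew : (cshape T').getD (ncol w V) 0 <
            (cshape (colInsert w' V')).getD (ncol w V) 0 := by
          rw [← hshf, ← hsh]
          have h1 : (cshape (colInsert w V)).getD (ncol w V) 0 = nrow w V :=
            (nrow_eq w V).symm
          rw [h1, nrow_eq' w V]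
          have := cshape_insertCol_getD_mono b₀ T (ncol w V)
          rw [← hVd] at this
          omega
        have g1 := grow hT hch₀ hbw (ncol w' V') (fun h => hne h.symm) (by
          rw [← hVd]; exact hnew')
        have g2 := grow hT' hch₀' hbw' (ncol w V) hne (by
          rw [← hVd']; exact hnew)
        rw [← hVd] at g1
        rw [← hVd'] at g2
        rw [hshf] at g1
        omega
      -- shapes of V and V' coincide
      have hshV : cshape V = cshape V' := by
        apply bump_inj (cshape_pos hVtab) (cshape_pos hVtab') hjs (hjj ▸ hjs')
        have e1 : bump (cshape V) (ncol w V) = cshape (colInsert w V) :=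
          (cshape_colInsert w V).symm
        have e2 : bump (cshape V') (ncol w' V') = cshape (colInsert w' V') :=
          (cshape_colInsert w' V').symm
        rw [e1, hjj, e2, hshf]
      obtain ⟨hww, hVV⟩ := colInsert_inj hVtab hVtab' he hjj hshV
      have hlen : b₀.length = n := by simp at hb; omega
      have hlen' : b₀'.length = n := by simp at hb'; omega
      obtain ⟨hbb, hTT⟩ := ih hlen hlen' hch₀ hch₀' hT hT' hsh hVV
      exact ⟨by rw [hbb, hww], hTT⟩

end MultiInsert
section Final

lemma cshape_sum_insertCol (b : List ℕ) (T : List (List ℕ)) :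
    (cshape (insertCol b T)).sum = (cshape T).sum + b.length := by
  induction b generalizing T with
  | nil => simp [insertCol]
  | cons w b ih =>
      rw [insertCol_cons, ih, cshape_colInsert, sum_bump]
      simp
      try omega

lemma countP_le_split (v : ℕ) (l : List ℕ) :
    l.countP (fun c => decide (v ≤ c)) =
      l.count v + l.countP (fun c => decide (v + 1 ≤ c)) := by
  induction l with
  | nil => simp
  | cons a l ih =>
      rw [List.countP_cons, List.countP_cons, List.count_cons]
      rcases lt_trichotomy a v with h | h | h
      · have h1 : decide (v ≤ a) = false := by simp; omega
        have h2 : decide (v + 1 ≤ a) = false := by simp; omega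
        have h3 : (a == v) = false := by simp; omega
        rw [h1, h2, h3]
        simp [ih]
        try omega
      · subst h
        have h1 : decide (a ≤ a) = true := by simp
        have h2 : decide (a + 1 ≤ a) = false := by simp
        have h3 : (a == a) = true := by simp
        rw [h1, h2, h3]
        simp [ih]
        try omega
      · have h1 : decide (v ≤ a) = true := by simp; omega
        have h2 : decide (v + 1 ≤ a) = true := by simp; omega
        have h3 : (a == v) = false := by simp; omega
        rw [h1, h2, h3]
        simp [ih]
        try omega

lemma rowLen_eq_countP (T : List (List ℕ)) (i : ℕ) :
    rowLen T i = (cshape T).countP (fun c => decide (i ≤ c)) := by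
  rw [cshape, List.countP_map]
  rfl

lemma cshape_sorted {T : List (List ℕ)} (hT : Tab T) :
    (cshape T).Pairwise (· ≥ ·) := by
  have h1 : T.IsChain (fun a b => a.length ≥ b.length) :=
    List.IsChain.imp (fun a b hab => hab.1) hT.2.2
  have h2 : (cshape T).IsChain (· ≥ ·) := by
    rw [cshape, List.isChain_map]
    exact h1
  exact List.isChain_iff_pairwise.mp h2

lemma cshape_eq_of_shape {m₁ m₂ : ℕ} {T₁ T₂ : List (List ℕ)} {lam : List ℕ}
    (h₁ : IsTableau m₁ T₁) (h₂ : IsTableau m₂ T₂)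
    (hs₁ : hasShape T₁ lam) (hs₂ : hasShape T₂ lam) : cshape T₁ = cshape T₂ := by
  have t1 : Tab T₁ := isTableau_tab h₁
  have t2 : Tab T₂ := isTableau_tab h₂
  have hcountP : ∀ i, 1 ≤ i →
      (cshape T₁).countP (fun c => decide (i ≤ c)) =
      (cshape T₂).countP (fun c => decide (i ≤ c)) := by
    intro i hi
    rw [← rowLen_eq_countP, ← rowLen_eq_countP, hs₁ i hi, hs₂ i hi]
  have hcount : ∀ v, (cshape T₁).count v = (cshape T₂).count v := by
    intro v
    cases v with
    | zero =>
        rw [List.count_eq_zero_of_not_mem, List.count_eq_zero_of_not_mem]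
        · intro hm; have := cshape_pos t2 0 hm; omega
        · intro hm; have := cshape_pos t1 0 hm; omega
    | succ v =>
        have e1 := countP_le_split (v + 1) (cshape T₁)
        have e2 := countP_le_split (v + 1) (cshape T₂)
        have e3 := hcountP (v + 1) (by omega)
        have e4 := hcountP (v + 1 + 1) (by omega)
        omega
  exact (List.perm_iff_count.mpr hcount).eq_of_pairwise'
    (cshape_sorted t1) (cshape_sorted t2)

end Final

theorem stmt18 (n : ℕ) (hn : 1 ≤ n) (lam : List ℕ)
    (hlam : IsPartition lam) (hlen : lam.length ≤ 2 * n)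
    (T₁ T₂ : List (List ℕ))
    (hT₁ : IsTableau (2 * n) T₁) (hsh₁ : hasShape T₁ lam)
    (hT₂ : IsTableau (2 * n) T₂) (hsh₂ : hasShape T₂ lam)
    (h : suc T₁ = suc T₂) : T₁ = T₂ := by
  have t1 : Tab T₁ := isTableau_tab hT₁
  have t2 : Tab T₂ := isTableau_tab hT₂
  have hsh : cshape T₁ = cshape T₂ := cshape_eq_of_shape hT₁ hT₂ hsh₁ hsh₂
  cases T₁ with
  | nil =>
      cases T₂ with
      | nil => rfl
      | cons c r => simp [cshape] at hsh
  | cons c₁ r₁ =>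
      cases T₂ with
      | nil => simp [cshape] at hsh
      | cons c₂ r₂ =>
          simp only [cshape, List.map_cons, List.cons.injEq] at hsh
          obtain ⟨hc, hr⟩ := hsh
          have hr' : cshape r₁ = cshape r₂ := hr
          simp only [suc] at h
          have hs1 := cshape_sum_insertCol (redSeq c₁) r₁
          have hs2 := cshape_sum_insertCol (redSeq c₂) r₂
          have hsum : (cshape r₁).sum = (cshape r₂).sum := by rw [hr']
          have hlenred : (redSeq c₁).length = (redSeq c₂).length := by
            rw [h] at hs1; omega
          have hchc₁ : c₁.IsChain (· < ·) := t1.2.1 c₁ (by simp)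
          have hchc₂ : c₂.IsChain (· < ·) := t2.2.1 c₂ (by simp)
          have hch₁ : (redSeq c₁).IsChain (· < ·) :=
            hchc₁.sublist (List.filter_sublist (l := c₁))
          have hch₂ : (redSeq c₂).IsChain (· < ·) :=
            hchc₂.sublist (List.filter_sublist (l := c₂))
          obtain ⟨hred, hrr⟩ := insertCol_inj (redSeq c₁).length rfl hlenred.symm
            hch₁ hch₂ (tab_tail t1) (tab_tail t2) hr' h
          have hpos₁ : ∀ x ∈ c₁, 1 ≤ x := fun x hx =>
            (hT₁.2.2.1 c₁ (by simp) x hx).1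
          have hpos₂ : ∀ x ∈ c₂, 1 ≤ x := fun x hx =>
            (hT₂.2.2.1 c₂ (by simp) x hx).1
          have hcc : c₁ = c₂ := redSeq_inj hchc₁ hchc₂ hpos₁ hpos₂ hc hred
          rw [hcc, hrr]
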